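/- Let N ≥ 1, m ∈ ℕ, and let p = Σ_{|α| = m} c_α x^α be a complex-coefficient polynomial on ℝ^N homogeneous of degree m. Then for every multi-index γ ∈ ℕ^N, ‖∂^γ p‖_F ≤ m^{|γ|} · ‖p‖_F, where the Fischer norm of a polynomial q = Σ_α d_α x^α is defined by ‖q‖_F² = Σ_α α! · |d_α|² (with α! = α_1!⋯α_N!). -/

import Mathlib

open MvPolynomial

lemma coeff_pderiv {N : ℕ} (j : Fin N) (p : MvPolynomial (Fin N) ℂ) (β : Fin N →₀ ℕ) :
    coeff β (pderiv j p) = (β j + 1 : ℂ) * coeff (β + Finsupp.single j 1) p := by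
  induction p using MvPolynomial.induction_on' with
  | monomial s a =>
    rw [pderiv_monomial, coeff_monomial, coeff_monomial]
    by_cases h : s = β + Finsupp.single j 1
    · subst h
      have h1 : β + Finsupp.single j 1 - Finsupp.single j 1 = β := by
        ext i; simp [Finsupp.single_apply]
      rw [if_pos h1, if_pos rfl]
      simp only [Finsupp.add_apply, Finsupp.single_eq_same]
      push_cast; ring
    · rw [if_neg h, mul_zero]
      split_ifs with h'
      · by_cases hs : s j = 0
        · simp [hs]
        · exfalso; apply h
          ext i
          have := DFunLike.congr_fun h' i
          simp [Finsupp.single_apply] at this ⊢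
          rcases eq_or_ne j i with rfl | hji
          · simp at this ⊢; omega
          · simp [hji] at this ⊢; omega
      · rfl
  | add p q hp hq => simp [hp, hq]; ring

lemma coeff_pderiv_pow {N : ℕ} (j : Fin N) (k : ℕ) (p : MvPolynomial (Fin N) ℂ)
    (β : Fin N →₀ ℕ) :
    coeff β ((((pderiv j).toLinearMap : Module.End ℂ (MvPolynomial (Fin N) ℂ)) ^ k) p) =
      (((β j + k).descFactorial k : ℕ) : ℂ) * coeff (β + Finsupp.single j k) p := by
  induction k generalizing p with
  | zero => simp
  | succ k ih =>
    rw [pow_succ, Module.End.mul_apply, ih]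
    simp only [Derivation.coeFn_coe]
    rw [coeff_pderiv]
    have h1 : (β + Finsupp.single j k) j = β j + k := by
      simp only [Finsupp.add_apply, Finsupp.single_eq_same]
    have h2 : β + Finsupp.single j k + Finsupp.single j 1 = β + Finsupp.single j (k + 1) := by
      ext i; simp [Finsupp.single_apply]; split <;> omega
    rw [h1, h2, ← mul_assoc]
    congr 1
    have : (β j + (k + 1)).descFactorial (k + 1) = (β j + k + 1) * (β j + k).descFactorial k := by
      rw [← Nat.add_assoc]
      exact Nat.succ_descFactorial_succ (β j + k) k
    rw [this]; push_cast; ring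

lemma coeff_foldr {N : ℕ} (γ : Fin N → ℕ) (l : List (Fin N)) (hl : l.Nodup)
    (p : MvPolynomial (Fin N) ℂ) (β : Fin N →₀ ℕ) :
    coeff β ((l.foldr (fun j D => ((MvPolynomial.pderiv j).toLinearMap) ^ (γ j) * D)
        (1 : Module.End ℂ (MvPolynomial (Fin N) ℂ))) p) =
      (((l.map (fun j => (β j + γ j).descFactorial (γ j))).prod : ℕ) : ℂ) *
        coeff (β + (l.map (fun j => Finsupp.single j (γ j))).sum) p := by
  induction l generalizing β with
  | nil => simp
  | cons j l ih =>
    rw [List.foldr_cons, Module.End.mul_apply, coeff_pderiv_pow,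
      ih hl.of_cons _]
    have hj : j ∉ l := (List.nodup_cons.mp hl).1
    have hmap : (l.map (fun i => ((β + Finsupp.single j (γ j)) i + γ i).descFactorial (γ i)))
        = l.map (fun i => (β i + γ i).descFactorial (γ i)) := by
      apply List.map_congr_left
      intro i hi
      have hij : i ≠ j := fun h => hj (h ▸ hi)
      simp [Finsupp.add_apply, Finsupp.single_apply, hij.symm]
    rw [hmap, List.map_cons, List.prod_cons, List.map_cons, List.sum_cons, add_assoc]
    push_cast; ring

/-- The multi-index partial derivative `∂^γ` on polynomials. -/
noncomputable def mderiv {N : ℕ} (γ : Fin N → ℕ) :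
    Module.End ℂ (MvPolynomial (Fin N) ℂ) :=
  (List.finRange N).foldr
    (fun j D => ((MvPolynomial.pderiv j).toLinearMap) ^ (γ j) * D) 1

/-- The square of the Fischer norm: for `q = Σ_α d_α x^α`,
`‖q‖_F² = Σ_α α! |d_α|²`. -/
noncomputable def fischerNormSq {N : ℕ} (p : MvPolynomial (Fin N) ℂ) : ℝ :=
  ∑ α ∈ p.support, (∏ j, ((α j).factorial : ℝ)) * ‖MvPolynomial.coeff α p‖ ^ 2

lemma coeff_mderiv {N : ℕ} (γ : Fin N → ℕ) (p : MvPolynomial (Fin N) ℂ) (β : Fin N →₀ ℕ) :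
    coeff β (mderiv γ p) =
      (((∏ j, (β j + γ j).descFactorial (γ j)) : ℕ) : ℂ) *
        coeff (β + ∑ j, Finsupp.single j (γ j)) p := by
  rw [mderiv]
  rw [coeff_foldr γ _ (List.nodup_finRange N)]
  rw [Fin.prod_univ_def, Fin.sum_univ_def]

lemma fischerNormSq_nonneg {N : ℕ} (p : MvPolynomial (Fin N) ℂ) : 0 ≤ fischerNormSq p := by
  apply Finset.sum_nonneg
  intro α _
  positivity

theorem stmt9 (N : ℕ) (hN : 1 ≤ N) (m : ℕ) (p : MvPolynomial (Fin N) ℂ)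
    (hhom : p.IsHomogeneous m) (γ : Fin N → ℕ) :
    Real.sqrt (fischerNormSq (mderiv γ p)) ≤
      (m : ℝ) ^ (∑ j, γ j) * Real.sqrt (fischerNormSq p) := by
  classical
  set s := ∑ j, γ j with hs
  set Γ : Fin N →₀ ℕ := ∑ j, Finsupp.single j (γ j) with hΓdef
  have hΓ : ∀ i, Γ i = γ i := by
    intro i
    rw [hΓdef, Finsupp.finset_sum_apply]
    simp [Finsupp.single_apply]
  set q := mderiv γ p with hq
  set g : (Fin N →₀ ℕ) → ℝ := fun α => (∏ j, ((α j).factorial : ℝ)) * ‖coeff α p‖ ^ 2 with hg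
  have key : fischerNormSq q ≤ (m : ℝ) ^ (2 * s) * fischerNormSq p := by
    have step1 : ∀ β ∈ q.support,
        (∏ j, ((β j).factorial : ℝ)) * ‖coeff β q‖ ^ 2 ≤
          (m : ℝ) ^ (2 * s) * g (β + Γ) := by
      intro β hβ
      have hne : coeff β q ≠ 0 := mem_support_iff.mp hβ
      rw [hq, coeff_mderiv, ← hΓdef] at hne
      have hcp : coeff (β + Γ) p ≠ 0 := fun h => hne (by rw [h, mul_zero])
      have hαj : ∀ j, (β + Γ) j = β j + γ j := by
        intro j; rw [Finsupp.add_apply, hΓ]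
      have hdeg : (β + Γ).degree = m := by
        by_contra h
        exact hcp (hhom.coeff_eq_zero h)
      have hle : ∀ j, β j + γ j ≤ m := by
        intro j
        rw [← hαj j, ← hdeg]
        exact Finsupp.le_degree j (β + Γ)
      set D : ℕ := ∏ j, (β j + γ j).descFactorial (γ j) with hD
      have hDprod : (∏ j, (β j).factorial) * D = ∏ j, (β j + γ j).factorial := by
        rw [hD, ← Finset.prod_mul_distrib]
        apply Finset.prod_congr rfl
        intro j _
        have := Nat.factorial_mul_descFactorial (Nat.le_add_left (γ j) (β j))
        rwa [Nat.add_sub_cancel] at this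
      have hDle : D ≤ m ^ s := by
        calc D ≤ ∏ j, (β j + γ j) ^ (γ j) :=
              Finset.prod_le_prod (fun _ _ => Nat.zero_le _)
                (fun j _ => Nat.descFactorial_le_pow _ _)
          _ ≤ ∏ j : Fin N, m ^ (γ j) :=
              Finset.prod_le_prod (fun _ _ => Nat.zero_le _)
                (fun j _ => Nat.pow_le_pow_left (hle j) _)
          _ = m ^ s := by rw [← Finset.prod_pow_eq_pow_sum]
      have hms : m ^ s ≤ m ^ (2 * s) := by
        rcases Nat.eq_zero_or_pos (m ^ s) with h | h
        · rw [two_mul, pow_add, h]; simp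
        · rw [two_mul, pow_add]
          exact Nat.le_mul_of_pos_left _ h
      have hnat : (∏ j, (β j).factorial) * D ^ 2 ≤
          m ^ (2 * s) * ∏ j, (β j + γ j).factorial := by
        calc (∏ j, (β j).factorial) * D ^ 2
            = ((∏ j, (β j).factorial) * D) * D := by ring
          _ = (∏ j, (β j + γ j).factorial) * D := by rw [hDprod]
          _ ≤ (∏ j, (β j + γ j).factorial) * m ^ (2 * s) :=
              Nat.mul_le_mul_left _ (hDle.trans hms)
          _ = m ^ (2 * s) * ∏ j, (β j + γ j).factorial := Nat.mul_comm _ _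
      have hcoeffq : ‖coeff β q‖ ^ 2 = (D : ℝ) ^ 2 * ‖coeff (β + Γ) p‖ ^ 2 := by
        rw [hq, coeff_mderiv, ← hΓdef, ← hD, norm_mul, mul_pow]
        norm_num
      rw [hcoeffq]
      simp only [hg]
      have hprodeq : (∏ j, (((β + Γ) j).factorial : ℝ)) =
          ∏ j, ((β j + γ j).factorial : ℝ) := by
        apply Finset.prod_congr rfl
        intro j _
        rw [hαj j]
      rw [hprodeq]
      have hcast : (∏ j, ((β j).factorial : ℝ)) * (D : ℝ) ^ 2 ≤
          ((m : ℝ) ^ (2 * s)) * ∏ j, ((β j + γ j).factorial : ℝ) := by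
        exact_mod_cast hnat
      calc (∏ j, ((β j).factorial : ℝ)) * ((D : ℝ) ^ 2 * ‖coeff (β + Γ) p‖ ^ 2)
          = ((∏ j, ((β j).factorial : ℝ)) * (D : ℝ) ^ 2) * ‖coeff (β + Γ) p‖ ^ 2 := by ring
        _ ≤ ((m : ℝ) ^ (2 * s) * (∏ j, ((β j + γ j).factorial : ℝ))) * ‖coeff (β + Γ) p‖ ^ 2 := by
            exact mul_le_mul_of_nonneg_right hcast (by positivity)
        _ = (m : ℝ) ^ (2 * s) * ((∏ j, ((β j + γ j).factorial : ℝ)) * ‖coeff (β + Γ) p‖ ^ 2) := by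
            ring
    have sum1 : fischerNormSq q ≤ ∑ β ∈ q.support, (m : ℝ) ^ (2 * s) * g (β + Γ) :=
      Finset.sum_le_sum step1
    have sum2 : ∑ β ∈ q.support, g (β + Γ) ≤ fischerNormSq p := by
      have hinj : Set.InjOn (· + Γ) q.support := fun a _ b _ h => by
        simpa using add_left_injective Γ h
      rw [← Finset.sum_image hinj]
      apply Finset.sum_le_sum_of_subset_of_nonneg
      · intro α hα
        simp only [Finset.mem_image] at hα
        obtain ⟨β, hβ, rfl⟩ := hα
        have hne : coeff β q ≠ 0 := mem_support_iff.mp hβ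
        rw [hq, coeff_mderiv, ← hΓdef] at hne
        exact mem_support_iff.mpr (fun h => hne (by rw [h, mul_zero]))
      · intro α _ _
        rw [hg]; positivity
    calc fischerNormSq q ≤ ∑ β ∈ q.support, (m : ℝ) ^ (2 * s) * g (β + Γ) := sum1
      _ = (m : ℝ) ^ (2 * s) * ∑ β ∈ q.support, g (β + Γ) := (Finset.mul_sum _ _ _).symm
      _ ≤ (m : ℝ) ^ (2 * s) * fischerNormSq p := by
          apply mul_le_mul_of_nonneg_left sum2 (by positivity)
  calc Real.sqrt (fischerNormSq q)
      ≤ Real.sqrt ((m : ℝ) ^ (2 * s) * fischerNormSq p) := Real.sqrt_le_sqrt key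
    _ = (m : ℝ) ^ s * Real.sqrt (fischerNormSq p) := by
        rw [show (m : ℝ) ^ (2 * s) = ((m : ℝ) ^ s) ^ 2 by rw [← pow_mul]; ring_nf,
          Real.sqrt_mul (by positivity), Real.sqrt_sq (by positivity)]
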